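/- Let n be a positive integer. Define the (n+1)×(n+1) real matrix B by B_{00} = 1, B_{i0} = 0 for i ≥ 1, and B_{ij} = (−1)^j · (cos(jπ/n) − 1)^i for 1 ≤ j ≤ n and 0 ≤ i ≤ n. Define y ∈ ℝ^{n+1} by y_0 = (2n² + 1)/6, y_j = csc²(jπ/(2n)) for 1 ≤ j ≤ n−1, and y_n = 1/2. Then y is the unique solution of B·y = e_1, where e_1 = (0,1,0,…,0)^T is the vector with 1 in coordinate i = 1 and 0 elsewhere. -/

import Mathlib

open Finset Complex

private lemma psum1 (z : ℂ) (m : ℕ) :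
    (z - 1) * ∑ k ∈ range m, (k : ℂ) * z ^ k
      = ((m : ℂ) - 1) * z ^ m + 1 - ∑ k ∈ range m, z ^ k := by
  induction m with
  | zero => simp
  | succ m ih =>
    rw [sum_range_succ, sum_range_succ (f := fun k => z ^ k), mul_add, ih]
    push_cast; ring

private lemma psum2 (z : ℂ) (m : ℕ) :
    (z - 1) * ∑ k ∈ range m, (k : ℂ) ^ 2 * z ^ k
      = ((m : ℂ) - 1) ^ 2 * z ^ m - 2 * ∑ k ∈ range m, (k : ℂ) * z ^ k
        + ∑ k ∈ range m, z ^ k - 1 := by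
  induction m with
  | zero => simp
  | succ m ih =>
    rw [sum_range_succ, sum_range_succ (f := fun k => z ^ k),
      sum_range_succ (f := fun k => (k : ℂ) * z ^ k), mul_add, ih]
    push_cast; ring

private lemma rootsum0 (m : ℕ) (z : ℂ) (hz : z ^ m = 1) (hz1 : z ≠ 1) :
    ∑ k ∈ range m, z ^ k = 0 := by
  rw [geom_sum_eq hz1, hz, sub_self, zero_div]

private lemma key_inv (m : ℕ) (z : ℂ) (hz : z ^ m = 1) (hz1 : z ≠ 1) :
    (∑ k ∈ range m, (((m : ℂ) - 2) * k - (k : ℂ) ^ 2) * z ^ k) * (1 - z) ^ 2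
      = 2 * m := by
  have h0 := rootsum0 m z hz hz1
  have h1 := psum1 z m
  have h2 := psum2 z m
  rw [hz, h0] at h1 h2
  have hsplit : ∑ k ∈ range m, (((m : ℂ) - 2) * k - (k : ℂ) ^ 2) * z ^ k
      = ((m : ℂ) - 2) * (∑ k ∈ range m, (k : ℂ) * z ^ k)
        - ∑ k ∈ range m, (k : ℂ) ^ 2 * z ^ k := by
    rw [mul_sum, ← sum_sub_distrib]
    exact sum_congr rfl fun k _ => by ring
  rw [hsplit]
  linear_combination (((m : ℂ) - 2) * (z - 1) + 2) * h1 - (z - 1) * h2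

private lemma csum1 (m : ℕ) : ∑ k ∈ range m, (k : ℂ) = m * (m - 1) / 2 := by
  induction m with
  | zero => simp
  | succ m ih => rw [sum_range_succ, ih]; push_cast; ring

private lemma csum2 (m : ℕ) :
    ∑ k ∈ range m, (k : ℂ) ^ 2 = m * (m - 1) * (2 * m - 1) / 6 := by
  induction m with
  | zero => simp
  | succ m ih => rw [sum_range_succ, ih]; push_cast; ring

private noncomputable def zet (n : ℕ) : ℂ := Complex.exp (Real.pi * Complex.I / n)

private noncomputable def cc (n j : ℕ) : ℝ := Real.cos (j * Real.pi / n) - 1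

private lemma zet_pow (n j : ℕ) :
    zet n ^ j = Complex.exp (j * Real.pi * Complex.I / n) := by
  rw [zet, ← Complex.exp_nat_mul]; ring_nf

private lemma zet_ne_zero (n : ℕ) : zet n ≠ 0 := Complex.exp_ne_zero _

private lemma cc_zet (n j : ℕ) :
    ((cc n j : ℝ) : ℂ) * (2 * zet n ^ j) = (zet n ^ j - 1) ^ 2 := by
  have hinv : zet n ^ j * Complex.exp (-(j * Real.pi * Complex.I / n)) = 1 := by
    rw [zet_pow, ← Complex.exp_add]; simp
  have hcos : Complex.cos ((j : ℂ) * (Real.pi : ℂ) / (n : ℂ))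
      = (zet n ^ j + Complex.exp (-(j * Real.pi * Complex.I / n))) / 2 := by
    rw [Complex.cos, zet_pow]; ring_nf
  rw [cc]
  push_cast
  rw [hcos]
  linear_combination hinv

private lemma zet_pow_n {n : ℕ} (hn : 1 ≤ n) : zet n ^ n = -1 := by
  rw [zet_pow, ← Complex.exp_pi_mul_I]
  congr 1
  have h : (n : ℂ) ≠ 0 := Nat.cast_ne_zero.2 (by omega)
  field_simp

private lemma zet_pow_2n {n : ℕ} (hn : 1 ≤ n) : zet n ^ (2 * n) = 1 := by
  rw [two_mul, pow_add, zet_pow_n hn]; ring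

private lemma zet_pow_ne_one {n : ℕ} (hn : 1 ≤ n) {m : ℕ} (hm : ¬ (2 * n ∣ m)) :
    zet n ^ m ≠ 1 := by
  rw [zet_pow]
  intro h
  rw [Complex.exp_eq_one_iff] at h
  obtain ⟨k, hk⟩ := h
  have hπ : (Real.pi : ℂ) ≠ 0 := by simpa using Real.pi_ne_zero
  have hI : Complex.I ≠ 0 := Complex.I_ne_zero
  have hncast : (n : ℂ) ≠ 0 := Nat.cast_ne_zero.2 (by omega)
  have hπI : (Real.pi : ℂ) * Complex.I ≠ 0 := mul_ne_zero hπ hI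
  have h2 : (m : ℂ) * ((Real.pi : ℂ) * Complex.I)
      = ((2 * k * n : ℤ) : ℂ) * ((Real.pi : ℂ) * Complex.I) := by
    push_cast
    field_simp at hk
    linear_combination ((Real.pi : ℂ) * Complex.I) * hk
  have h3 : (m : ℂ) = ((2 * k * n : ℤ) : ℂ) := mul_right_cancel₀ hπI h2
  have h4 : (m : ℤ) = 2 * k * n := by exact_mod_cast h3
  apply hm
  have : ((2 * n : ℕ) : ℤ) ∣ (m : ℤ) := ⟨k, by push_cast; linarith [h4]⟩
  exact_mod_cast this

private lemma geo_zero {n : ℕ} (hn : 1 ≤ n) {m : ℕ} (hm : ¬ (2 * n ∣ m)) :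
    ∑ j ∈ range (2 * n), (zet n ^ m) ^ j = 0 := by
  apply rootsum0
  · rw [← pow_mul, mul_comm m, pow_mul, zet_pow_2n hn, one_pow]
  · exact zet_pow_ne_one hn hm

private lemma L1C {n : ℕ} (hn : 1 ≤ n) {k : ℕ} (hk : k < n) :
    ∑ j ∈ range (2 * n), (-1 : ℂ) ^ j * ((cc n j : ℝ) : ℂ) ^ k = 0 := by
  have h2k : (2 : ℂ) ^ k ≠ 0 := pow_ne_zero _ two_ne_zero
  have key : (∑ j ∈ range (2 * n), (-1 : ℂ) ^ j * ((cc n j : ℝ) : ℂ) ^ k) * 2 ^ k = 0 := by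
    rw [sum_mul]
    have hpt : ∀ j ∈ range (2 * n), (-1 : ℂ) ^ j * ((cc n j : ℝ) : ℂ) ^ k * 2 ^ k
        = (zet n ^ (n - k)) ^ j * (zet n ^ j - 1) ^ (2 * k) := by
      intro j _
      have h2 : (zet n ^ j - 1) ^ (2 * k)
          = ((cc n j : ℝ) : ℂ) ^ k * (2 ^ k * (zet n ^ j) ^ k) := by
        rw [pow_mul, ← cc_zet, mul_pow, mul_pow]
      have h3 : (-1 : ℂ) ^ j = (zet n ^ (n - k)) ^ j * (zet n ^ j) ^ k := by
        have e1 : (-1 : ℂ) ^ j = (zet n ^ n) ^ j := by rw [zet_pow_n hn]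
        have e2 : zet n ^ n = zet n ^ (n - k) * zet n ^ k := by
          rw [← pow_add, Nat.sub_add_cancel hk.le]
        rw [e1, e2, mul_pow]; ring
      rw [h3, h2]; ring
    rw [sum_congr rfl hpt]
    have hpt2 : ∀ j ∈ range (2 * n), (zet n ^ (n - k)) ^ j * (zet n ^ j - 1) ^ (2 * k)
        = ∑ a ∈ range (2 * k + 1),
            ((-1 : ℂ) ^ (a + 2 * k) * ((2 * k).choose a : ℂ)) * (zet n ^ (n - k + a)) ^ j := by
      intro j _
      rw [sub_pow, mul_sum]
      refine sum_congr rfl fun a _ => ?_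
      have h4 : (zet n ^ (n - k + a)) ^ j = (zet n ^ (n - k)) ^ j * (zet n ^ j) ^ a := by
        rw [pow_add, mul_pow]; ring
      rw [h4]; ring
    rw [sum_congr rfl hpt2, sum_comm]
    refine sum_eq_zero fun a ha => ?_
    rw [← mul_sum, geo_zero hn ?_, mul_zero]
    rw [mem_range] at ha
    intro hdvd
    have h1 : 0 < n - k + a := by omega
    have h2' : n - k + a < 2 * n := by omega
    have := Nat.le_of_dvd h1 hdvd
    omega
  exact (mul_eq_zero.1 key).resolve_right h2k



private lemma cc_zero (n : ℕ) : cc n 0 = 0 := by simp [cc]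

private lemma cc_n {n : ℕ} (hn : 1 ≤ n) : cc n n = -2 := by
  have h : ((n : ℝ)) ≠ 0 := Nat.cast_ne_zero.2 (by omega)
  rw [cc]
  rw [show (n : ℝ) * Real.pi / n = Real.pi by field_simp]
  rw [Real.cos_pi]; norm_num

private lemma cc_neg {n : ℕ} (hn : 1 ≤ n) {j : ℕ} (h1 : 1 ≤ j) (h2 : j ≤ n) :
    cc n j < 0 := by
  have hnR : (0 : ℝ) < n := by positivity
  have hjR : (0 : ℝ) < j := by exact_mod_cast h1
  have hpos : 0 < (j : ℝ) * Real.pi / n := by positivity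
  have hle : (j : ℝ) * Real.pi / n ≤ Real.pi := by
    rw [div_le_iff₀ hnR]
    have : (j : ℝ) ≤ n := by exact_mod_cast h2
    nlinarith [Real.pi_pos]
  have := Real.strictAntiOn_cos (Set.mem_Icc.2 ⟨le_refl 0, Real.pi_pos.le⟩)
    (Set.mem_Icc.2 ⟨hpos.le, hle⟩) hpos
  rw [Real.cos_zero] at this
  rw [cc]; linarith

private lemma cc_sym {n : ℕ} (hn : 1 ≤ n) {j : ℕ} (hj : j ≤ 2 * n) :
    cc n (2 * n - j) = cc n j := by
  have h : ((n : ℝ)) ≠ 0 := Nat.cast_ne_zero.2 (by omega)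
  rw [cc, cc]
  congr 1
  have hcast : ((2 * n - j : ℕ) : ℝ) = 2 * n - j := by
    push_cast [Nat.cast_sub hj]; ring
  rw [hcast]
  rw [show (2 * (n:ℝ) - j) * Real.pi / n = 2 * Real.pi - j * Real.pi / n by
    field_simp]
  rw [Real.cos_sub, Real.cos_two_pi, Real.sin_two_pi]
  ring

private lemma cc_lt {n : ℕ} (hn : 1 ≤ n) {j : ℕ} (h1 : 1 ≤ j) (h2 : j < 2 * n) :
    cc n j < 0 := by
  rcases le_or_gt j n with h | h
  · exact cc_neg hn h1 h
  · have h0 := cc_sym hn (j := 2 * n - j) (by omega)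
    rw [show 2 * n - (2 * n - j) = j by omega] at h0
    rw [h0]
    exact cc_neg hn (by omega) (by omega)

private lemma inner_geo {n : ℕ} (hn : 1 ≤ n) {k : ℕ} (hk : k < 2 * n) :
    ∑ j ∈ Ico 1 (2 * n), (zet n ^ (n + 1 + k)) ^ j
      = if k = n - 1 then (2 * (n : ℂ)) - 1 else -1 := by
  have h1 : (1 : ℕ) ≤ 2 * n := by omega
  rw [sum_Ico_eq_sub _ h1]
  by_cases hcase : k = n - 1
  · subst hcase
    rw [if_pos rfl]
    have he : n + 1 + (n - 1) = 2 * n := by omega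
    rw [he, zet_pow_2n hn]
    simp
  · rw [if_neg hcase]
    have hnd : ¬ (2 * n ∣ n + 1 + k) := by
      rintro ⟨t, ht⟩
      rcases t with _ | _ | t
      · omega
      · omega
      · nlinarith
    rw [geo_zero hn hnd]
    simp

private lemma L2C {n : ℕ} (hn : 1 ≤ n) :
    ∑ j ∈ Ico 1 (2 * n), (-1 : ℂ) ^ j * ((cc n j : ℝ) : ℂ)⁻¹
      = (2 * (n : ℂ) ^ 2 + 1) / 6 := by
  have hncast : (n : ℂ) ≠ 0 := Nat.cast_ne_zero.2 (by omega)
  have h2n : (2 * (n : ℂ)) ≠ 0 := by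
    intro h; apply hncast; linear_combination h / 2
  apply mul_right_cancel₀ h2n
  have key : (∑ j ∈ Ico 1 (2 * n), (-1 : ℂ) ^ j * ((cc n j : ℝ) : ℂ)⁻¹) * (2 * (n : ℂ))
      = ∑ k ∈ range (2 * n),
          ((((2 * n : ℕ) : ℂ) - 2) * k - (k : ℂ) ^ 2)
            * (if k = n - 1 then (2 * (n : ℂ)) - 1 else -1) := by
    rw [sum_mul]
    have hpt : ∀ j ∈ Ico 1 (2 * n),
        (-1 : ℂ) ^ j * ((cc n j : ℝ) : ℂ)⁻¹ * (2 * (n : ℂ))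
          = ∑ k ∈ range (2 * n),
              ((((2 * n : ℕ) : ℂ) - 2) * k - (k : ℂ) ^ 2) * (zet n ^ (n + 1 + k)) ^ j := by
      intro j hj
      rw [mem_Ico] at hj
      have hz1 : zet n ^ j ≠ 1 := zet_pow_ne_one hn (by
        intro hdvd
        have := Nat.le_of_dvd (by omega) hdvd
        omega)
      have hzm : (zet n ^ j) ^ (2 * n) = 1 := by
        rw [← pow_mul, mul_comm j, pow_mul, zet_pow_2n hn, one_pow]
      have hkey := key_inv (2 * n) (zet n ^ j) hzm hz1
      have hcz := cc_zet n j
      have hcne : ((cc n j : ℝ) : ℂ) ≠ 0 :=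
        Complex.ofReal_ne_zero.2 (ne_of_lt (cc_lt hn hj.1 hj.2))
      set G := ∑ k ∈ range (2 * n),
          ((((2 * n : ℕ) : ℂ) - 2) * k - (k : ℂ) ^ 2) * (zet n ^ j) ^ k with hG
      have hgc : (zet n ^ j * G * ((cc n j : ℝ) : ℂ)) * 2 = ((2 * n : ℕ) : ℂ) * 2 := by
        linear_combination G * hcz + hkey
      have hfin : zet n ^ j * G * ((cc n j : ℝ) : ℂ) = ((2 * n : ℕ) : ℂ) :=
        mul_right_cancel₀ two_ne_zero hgc
      have hexp : ∀ k ∈ range (2 * n),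
          ((((2 * n : ℕ) : ℂ) - 2) * k - (k : ℂ) ^ 2) * (zet n ^ (n + 1 + k)) ^ j
            = (zet n ^ (n + 1)) ^ j
              * (((((2 * n : ℕ) : ℂ) - 2) * k - (k : ℂ) ^ 2) * (zet n ^ j) ^ k) := by
        intro k _
        rw [pow_add, mul_pow]
        ring
      rw [sum_congr rfl hexp, ← mul_sum, ← hG]
      have hz2 : (zet n ^ (n + 1)) ^ j = (-1) ^ j * zet n ^ j := by
        rw [pow_add, mul_pow, zet_pow_n hn, pow_one]
      rw [hz2]
      push_cast at hfin
      field_simp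
      push_cast
      linear_combination (-1 : ℂ) * hfin
    rw [sum_congr rfl hpt, sum_comm]
    refine sum_congr rfl fun k hk => ?_
    rw [mem_range] at hk
    rw [← mul_sum, inner_geo hn hk]
  rw [key]
  have hsplit : ∀ k ∈ range (2 * n),
      ((((2 * n : ℕ) : ℂ) - 2) * k - (k : ℂ) ^ 2)
          * (if k = n - 1 then (2 * (n : ℂ)) - 1 else -1)
        = -(((((2 * n : ℕ) : ℂ) - 2) * k - (k : ℂ) ^ 2))
          + (if k = n - 1
              then ((((2 * n : ℕ) : ℂ) - 2) * k - (k : ℂ) ^ 2) * (2 * (n : ℂ)) else 0) := by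
    intro k _
    by_cases h : k = n - 1
    · simp only [if_pos h]; ring
    · simp only [if_neg h]; ring
  rw [sum_congr rfl hsplit, sum_add_distrib, sum_neg_distrib,
    Finset.sum_ite_eq' (range (2 * n)) (n - 1)
      (fun k => ((((2 * n : ℕ) : ℂ) - 2) * k - (k : ℂ) ^ 2) * (2 * (n : ℂ)))]
  rw [if_pos (mem_range.2 (by omega))]
  have hA : ∑ k ∈ range (2 * n), ((((2 * n : ℕ) : ℂ) - 2) * k - (k : ℂ) ^ 2)
      = (((2 * n : ℕ) : ℂ) - 2) * (((2 * n : ℕ) : ℂ) * (((2 * n : ℕ) : ℂ) - 1) / 2)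
        - ((2 * n : ℕ) : ℂ) * (((2 * n : ℕ) : ℂ) - 1) * (2 * ((2 * n : ℕ) : ℂ) - 1) / 6 := by
    rw [← csum1 (2 * n), ← csum2 (2 * n), mul_sum, ← sum_sub_distrib]
  rw [hA]
  have hn1 : ((n - 1 : ℕ) : ℂ) = (n : ℂ) - 1 := by
    push_cast [Nat.cast_sub hn]; ring
  rw [hn1]
  push_cast
  field_simp
  ring

private lemma L1R {n : ℕ} (hn : 1 ≤ n) {k : ℕ} (hk : k < n) :
    ∑ j ∈ range (2 * n), (-1 : ℝ) ^ j * (cc n j) ^ k = 0 := by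
  apply Complex.ofReal_injective
  push_cast
  simpa using L1C hn hk

private lemma L2R {n : ℕ} (hn : 1 ≤ n) :
    ∑ j ∈ Ico 1 (2 * n), (-1 : ℝ) ^ j * (cc n j)⁻¹ = (2 * (n : ℝ) ^ 2 + 1) / 6 := by
  apply Complex.ofReal_injective
  push_cast
  simpa using L2C hn

private lemma fold {n : ℕ} (hn : 1 ≤ n) (F : ℕ → ℝ)
    (hF : ∀ j, 1 ≤ j → j < 2 * n → F (2 * n - j) = F j) :
    ∑ j ∈ Ico 1 (2 * n), F j = 2 * ∑ j ∈ Ico 1 n, F j + F n := by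
  have h1 : ∑ j ∈ Ico 1 (2 * n), F j = ∑ j ∈ Ico 1 n, F j + ∑ j ∈ Ico n (2 * n), F j := by
    rw [Finset.sum_Ico_consecutive]
    · omega
    · omega
  have h2 : ∑ j ∈ Ico n (2 * n), F j = F n + ∑ j ∈ Ico (n + 1) (2 * n), F j := by
    rw [Finset.sum_eq_sum_Ico_succ_bot (by omega)]
  have h3 : ∑ j ∈ Ico (n + 1) (2 * n), F j = ∑ j ∈ Ico 1 n, F j := by
    apply Finset.sum_nbij' (fun j => 2 * n - j) (fun j => 2 * n - j)
    · intro a ha; rw [mem_Ico] at *; omega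
    · intro a ha; rw [mem_Ico] at *; omega
    · intro a ha; rw [mem_Ico] at ha; omega
    · intro a ha; rw [mem_Ico] at ha; omega
    · intro a ha
      rw [mem_Ico] at ha
      have h5 := hF (2 * n - a) (by omega) (by omega)
      rw [show 2 * n - (2 * n - a) = a by omega] at h5
      exact h5
  rw [h1, h2, h3]; ring

private lemma sin_cc {n : ℕ} (hn : 1 ≤ n) (j : ℕ) :
    (Real.sin ((j : ℝ) * Real.pi / (2 * n))) ^ 2 = -(cc n j) / 2 := by
  have hnR : ((n : ℝ)) ≠ 0 := Nat.cast_ne_zero.2 (by omega)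
  rw [Real.sin_sq_eq_half_sub, cc]
  rw [show 2 * ((j : ℝ) * Real.pi / (2 * n)) = (j : ℝ) * Real.pi / n by field_simp]
  ring

private lemma neg_pow_sym {n j : ℕ} (hj : j ≤ 2 * n) : (-1 : ℝ) ^ (2 * n - j) = (-1) ^ j := by
  have hb : (-1 : ℝ) ^ j * (-1) ^ j = 1 := by
    rw [← pow_add, ← two_mul, pow_mul]; norm_num
  have ha : (-1 : ℝ) ^ (2 * n - j) * (-1) ^ j = 1 := by
    rw [← pow_add, show 2 * n - j + j = 2 * n by omega, pow_mul]; norm_num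
  calc (-1 : ℝ) ^ (2 * n - j) = (-1) ^ (2 * n - j) * ((-1) ^ j * (-1) ^ j) := by
        rw [hb, mul_one]
    _ = ((-1 : ℝ) ^ (2 * n - j) * (-1) ^ j) * (-1) ^ j := by ring
    _ = (-1) ^ j := by rw [ha, one_mul]

private lemma half_inv (c : ℝ) : (-c / 2)⁻¹ = -2 * c⁻¹ := by
  rw [show -c / 2 = c * (-2)⁻¹ by norm_num; ring, mul_inv, inv_inv]
  ring

private lemma row0 {n : ℕ} (hn : 1 ≤ n) :
    (2 * (n : ℝ) ^ 2 + 1) / 6 + (∑ j ∈ Ico 1 n, (-1 : ℝ) ^ j * (-(cc n j) / 2)⁻¹)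
      + (-1) ^ n * (1 / 2) = 0 := by
  have hfold := _root_.fold hn (fun j => (-1 : ℝ) ^ j * (cc n j)⁻¹) (by
    intro j hj1 hj2
    rw [cc_sym hn (by omega), neg_pow_sym (by omega)])
  beta_reduce at hfold
  rw [L2R hn, cc_n hn] at hfold
  have hpt : ∀ j ∈ Ico 1 n, (-1 : ℝ) ^ j * (-(cc n j) / 2)⁻¹
      = -2 * ((-1 : ℝ) ^ j * (cc n j)⁻¹) := by
    intro j _
    rw [half_inv]; ring
  rw [sum_congr rfl hpt, ← mul_sum]
  have h5 : ∑ j ∈ Ico 1 n, (-1 : ℝ) ^ j * (cc n j)⁻¹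
      = ((2 * (n : ℝ) ^ 2 + 1) / 6 - (-1) ^ n * (-2 : ℝ)⁻¹) / 2 := by
    linarith [hfold]
  rw [h5]
  norm_num
  ring

private lemma mainrow {n : ℕ} (hn : 1 ≤ n) {i : ℕ} (h1 : 1 ≤ i) (h2 : i ≤ n) :
    (∑ j ∈ Ico 1 n, (-1 : ℝ) ^ j * (cc n j) ^ i * (-(cc n j) / 2)⁻¹)
      + (-1) ^ n * (cc n n) ^ i * (1 / 2)
      = if i = 1 then 1 else 0 := by
  obtain ⟨k, rfl⟩ : ∃ k, i = k + 1 := ⟨i - 1, by omega⟩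
  have hk : k < n := by omega
  have hL1 := L1R hn hk
  have hsplit : ∑ j ∈ range (2 * n), (-1 : ℝ) ^ j * (cc n j) ^ k
      = (-1 : ℝ) ^ 0 * (cc n 0) ^ k + ∑ j ∈ Ico 1 (2 * n), (-1 : ℝ) ^ j * (cc n j) ^ k := by
    rw [range_eq_Ico, Finset.sum_eq_sum_Ico_succ_bot (by omega)]
  have hfold := _root_.fold hn (fun j => (-1 : ℝ) ^ j * (cc n j) ^ k) (by
    intro j hj1 hj2
    rw [cc_sym hn (by omega), neg_pow_sym (by omega)])
  beta_reduce at hfold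
  rw [hsplit, hfold, cc_zero, cc_n hn] at hL1
  have hz : (0 : ℝ) ^ k = if k = 0 then 1 else 0 := by
    rcases Nat.eq_zero_or_pos k with h | h
    · simp [h]
    · rw [if_neg (by omega), zero_pow (by omega)]
  rw [hz] at hL1
  have hpt : ∀ j ∈ Ico 1 n, (-1 : ℝ) ^ j * (cc n j) ^ (k + 1) * (-(cc n j) / 2)⁻¹
      = -2 * ((-1 : ℝ) ^ j * (cc n j) ^ k) := by
    intro j hj
    rw [mem_Ico] at hj
    have hc : cc n j ≠ 0 := ne_of_lt (cc_neg hn hj.1 (by omega))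
    rw [half_inv, pow_succ]
    field_simp
  rw [sum_congr rfl hpt, ← mul_sum, cc_n hn]
  have h5 : ∑ j ∈ Ico 1 n, (-1 : ℝ) ^ j * (cc n j) ^ k
      = (-(if k = 0 then (1:ℝ) else 0) - (-1) ^ n * (-2) ^ k) / 2 := by
    linarith [hL1]
  rw [h5]
  by_cases hk0 : k = 0
  · subst hk0; norm_num; ring
  · rw [if_neg hk0, if_neg (by omega)]
    ring

private lemma cc_strict {n : ℕ} (hn : 1 ≤ n) {a b : ℕ} (h1 : 1 ≤ a) (hab : a < b)
    (h2 : b ≤ n) : cc n b < cc n a := by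
  have hnR : (0 : ℝ) < n := by positivity
  have haR : (0 : ℝ) ≤ (a : ℝ) * Real.pi / n := by positivity
  have hbR : (b : ℝ) * Real.pi / n ≤ Real.pi := by
    rw [div_le_iff₀ hnR]
    have : (b : ℝ) ≤ n := by exact_mod_cast h2
    nlinarith [Real.pi_pos]
  have haltb : (a : ℝ) * Real.pi / n < (b : ℝ) * Real.pi / n := by
    have h : (a : ℝ) < b := by exact_mod_cast hab
    have := Real.pi_pos
    apply div_lt_div_of_pos_right ?_ hnR
    nlinarith
  have := Real.strictAntiOn_cos (Set.mem_Icc.2 ⟨haR, le_trans haltb.le hbR⟩)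
    (Set.mem_Icc.2 ⟨le_trans haR haltb.le, hbR⟩) haltb
  rw [cc, cc]
  linarith

theorem stmt13 (n : ℕ) (hn : 1 ≤ n)
    (B : Matrix (Fin (n + 1)) (Fin (n + 1)) ℝ)
    (hB : ∀ i j : Fin (n + 1),
      B i j = if (j : ℕ) = 0 then (if (i : ℕ) = 0 then 1 else 0)
        else (-1) ^ (j : ℕ) * (Real.cos ((j : ℕ) * Real.pi / n) - 1) ^ (i : ℕ))
    (y : Fin (n + 1) → ℝ)
    (hy : ∀ j : Fin (n + 1),
      y j = if (j : ℕ) = 0 then (2 * (n : ℝ) ^ 2 + 1) / 6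
        else if (j : ℕ) = n then 1 / 2
        else ((Real.sin ((j : ℕ) * Real.pi / (2 * n))) ^ 2)⁻¹)
    (e1 : Fin (n + 1) → ℝ)
    (he1 : ∀ i : Fin (n + 1), e1 i = if (i : ℕ) = 1 then 1 else 0) :
    B.mulVec y = e1 ∧ ∀ y' : Fin (n + 1) → ℝ, B.mulVec y' = e1 → y' = y := by
  have hrow : B.mulVec y = e1 := by
    funext i
    have hswap : B.mulVec y i = ∑ jj ∈ range (n + 1),
        (if jj = 0 then (if (i : ℕ) = 0 then (1 : ℝ) else 0)
          else (-1) ^ jj * (cc n jj) ^ (i : ℕ))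
        * (if jj = 0 then (2 * (n : ℝ) ^ 2 + 1) / 6
            else if jj = n then 1 / 2
            else ((Real.sin ((jj : ℝ) * Real.pi / (2 * n))) ^ 2)⁻¹) := by
      rw [Matrix.mulVec, dotProduct,
        ← Fin.sum_univ_eq_sum_range (fun jj =>
          (if jj = 0 then (if (i : ℕ) = 0 then (1 : ℝ) else 0)
            else (-1) ^ jj * (cc n jj) ^ (i : ℕ))
          * (if jj = 0 then (2 * (n : ℝ) ^ 2 + 1) / 6
              else if jj = n then 1 / 2
              else ((Real.sin ((jj : ℝ) * Real.pi / (2 * n))) ^ 2)⁻¹)) (n + 1)]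
      refine Finset.sum_congr rfl fun j _ => ?_
      rw [hB, hy, cc]
    have hsplit1 : ∑ jj ∈ range (n + 1), (if jj = 0 then (if (i : ℕ) = 0 then (1 : ℝ) else 0)
          else (-1) ^ jj * (cc n jj) ^ (i : ℕ))
        * (if jj = 0 then (2 * (n : ℝ) ^ 2 + 1) / 6
            else if jj = n then 1 / 2
            else ((Real.sin ((jj : ℝ) * Real.pi / (2 * n))) ^ 2)⁻¹)
        = (if (i : ℕ) = 0 then (1 : ℝ) else 0) * ((2 * (n : ℝ) ^ 2 + 1) / 6)
          + (∑ jj ∈ Ico 1 n, (-1 : ℝ) ^ jj * (cc n jj) ^ (i : ℕ) * (-(cc n jj) / 2)⁻¹)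
          + (-1) ^ n * (cc n n) ^ (i : ℕ) * (1 / 2) := by
      rw [range_eq_Ico, Finset.sum_eq_sum_Ico_succ_bot (by omega),
        Finset.sum_Ico_succ_top (by omega : 1 ≤ n)]
      have hn0 : ¬ (n = 0) := by omega
      simp only [eq_self_iff_true, if_true, hn0, if_false]
      have hmid : ∀ jj ∈ Ico 1 n,
          (if jj = 0 then (if (i : ℕ) = 0 then (1 : ℝ) else 0)
            else (-1) ^ jj * (cc n jj) ^ (i : ℕ))
          * (if jj = 0 then (2 * (n : ℝ) ^ 2 + 1) / 6
              else if jj = n then 1 / 2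
              else ((Real.sin ((jj : ℝ) * Real.pi / (2 * n))) ^ 2)⁻¹)
          = (-1 : ℝ) ^ jj * (cc n jj) ^ (i : ℕ) * (-(cc n jj) / 2)⁻¹ := by
        intro jj hjj
        rw [mem_Ico] at hjj
        rw [if_neg (by omega), if_neg (by omega), if_neg (by omega), sin_cc hn jj]
      rw [sum_congr rfl hmid]
      ring
    rw [hswap, hsplit1, he1]
    by_cases hi : (i : ℕ) = 0
    · rw [if_pos hi, if_neg (by omega), hi]
      have h0 := row0 hn
      have hcongr : ∀ jj ∈ Ico 1 n,
          (-1 : ℝ) ^ jj * (cc n jj) ^ (0 : ℕ) * (-(cc n jj) / 2)⁻¹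
            = (-1 : ℝ) ^ jj * (-(cc n jj) / 2)⁻¹ := by
        intro jj _; rw [pow_zero]; ring
      rw [sum_congr rfl hcongr, pow_zero]
      linarith
    · rw [if_neg hi]
      have hmr := mainrow hn (i := (i : ℕ)) (by omega) (by omega)
      rw [zero_mul]
      linarith [hmr]
  refine ⟨hrow, ?_⟩
  have hdet : B.det ≠ 0 := by
    set v : Fin n → ℝ := fun j => cc n ((j : ℕ) + 1) with hv
    set d : Fin n → ℝ := fun j => (-1 : ℝ) ^ ((j : ℕ) + 1) * cc n ((j : ℕ) + 1) with hd
    have h1 : B.det = (B.submatrix Fin.succ Fin.succ).det := by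
      rw [Matrix.det_succ_column_zero, Finset.sum_eq_single (0 : Fin (n + 1))]
      · rw [hB]
        simp [Fin.succAbove_zero]
      · intro b _ hb
        rw [hB]
        have hbv : (b : ℕ) ≠ 0 := by
          rintro h; exact hb (Fin.ext (by simp [h]))
        simp [hbv]
      · simp
    have h2 : B.submatrix Fin.succ Fin.succ = (Matrix.vandermonde v).transpose * Matrix.diagonal d := by
      ext i j
      rw [Matrix.mul_diagonal, Matrix.submatrix_apply, hB]
      rw [if_neg (by simp [Fin.val_succ])]
      rw [Matrix.transpose_apply, Matrix.vandermonde_apply]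
      simp only [hv, hd, Fin.val_succ, cc]
      rw [pow_succ]
      ring
    have h3 : (Matrix.vandermonde v).det ≠ 0 := by
      rw [Matrix.det_vandermonde]
      rw [Finset.prod_ne_zero_iff]
      intro a _
      rw [Finset.prod_ne_zero_iff]
      intro b hb
      rw [Finset.mem_Ioi] at hb
      have habn : (a : ℕ) < (b : ℕ) := hb
      have hbn : (b : ℕ) < n := b.isLt
      have hlt : v b < v a := cc_strict hn (by omega) (by omega) (by omega)
      exact sub_ne_zero.2 (ne_of_lt hlt)
    have h4 : (Matrix.diagonal d).det ≠ 0 := by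
      rw [Matrix.det_diagonal, Finset.prod_ne_zero_iff]
      intro a _
      apply mul_ne_zero
      · exact pow_ne_zero _ (by norm_num)
      · have han : (a : ℕ) < n := a.isLt
        exact ne_of_lt (cc_neg hn (by omega) (by omega))
    rw [h1, h2, Matrix.det_mul, Matrix.det_transpose]
    exact mul_ne_zero h3 h4
  have hU : IsUnit B := (Matrix.isUnit_iff_isUnit_det B).2 (isUnit_iff_ne_zero.2 hdet)
  have hinj : Function.Injective B.mulVec := Matrix.mulVec_injective_iff_isUnit.2 hU
  intro y' h
  exact hinj (h.trans hrow.symm)
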